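/- Let μ ≥ 0 and let N be a Poisson random variable with mean μ. Then for any δ ∈ (0,1), the probability that μ < U₋(N,δ) is at most δ, where U₋(N,δ) := max{0, N − √(2·N·log(1/δ))}. -/

import Mathlib

open MeasureTheory ProbabilityTheory Real
open scoped NNReal ENNReal Nat

private lemma pade_log {t : ℝ} (ht : 1 ≤ t) : 2*(t-1)/(t+1) ≤ Real.log t := by
  have key : MonotoneOn (fun t : ℝ => Real.log t - 2*(t-1)/(t+1)) (Set.Ici 1) := by
    apply monotoneOn_of_deriv_nonneg (convex_Ici 1)
    · apply ContinuousOn.sub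
      · exact fun x hx => (Real.continuousAt_log (by simp at hx; linarith)).continuousWithinAt
      · apply ContinuousOn.div (by fun_prop) (by fun_prop)
        intro x hx; simp at hx; positivity
    · intro x hx
      simp only [interior_Ici, Set.mem_Ioi] at hx
      have hx0 : x ≠ 0 := by linarith
      have hx1 : x + 1 ≠ 0 := by linarith
      exact ((Real.differentiableAt_log hx0).sub
        (((differentiable_id.sub_const 1).const_mul 2).differentiableAt.div
          (differentiable_id.add_const 1).differentiableAt hx1)).differentiableWithinAt
    · intro x hx
      simp only [interior_Ici, Set.mem_Ioi] at hx
      have hx0 : x ≠ 0 := by linarith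
      have hx1 : x + 1 ≠ 0 := by linarith
      have h1 : HasDerivAt (fun t : ℝ => Real.log t - 2*(t-1)/(t+1))
          (x⁻¹ - (2*1*(x+1) - 2*(x-1)*1)/(x+1)^2) x := by
        exact (Real.hasDerivAt_log hx0).sub
          ((((hasDerivAt_id x).sub_const 1).const_mul 2).div
            ((hasDerivAt_id x).add_const 1) hx1)
      rw [h1.deriv]
      rw [sub_nonneg, div_le_iff₀ (by positivity)]
      rw [inv_mul_eq_div, le_div_iff₀ (by positivity)]
      nlinarith [sq_nonneg (x-1)]
  have := key (Set.mem_Ici.2 le_rfl) (Set.mem_Ici.2 ht) ht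
  simp only [Real.log_one] at this
  linarith

private lemma key_poly {t : ℝ} (ht : 1 ≤ t) : 2*(t-1)^2 ≤ 2*t^2*Real.log t - t^2 + 1 := by
  have h := pade_log ht
  have h1 : 0 < t + 1 := by linarith
  rw [div_le_iff₀ h1] at h
  nlinarith [mul_nonneg (sq_nonneg t) (sub_nonneg.2 h),
    mul_nonneg (mul_nonneg (sub_nonneg.2 ht) (sub_nonneg.2 ht)) (sub_nonneg.2 ht)]

private lemma expC {m : ℝ} {a : ℕ} (hm : 0 < m) (hma : m ≤ (a:ℝ)) :
    rexp ((a:ℝ) - m) * (m/(a:ℝ))^a ≤ rexp (-(2*(Real.sqrt a - Real.sqrt m)^2)) := by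
  have haR : 0 < (a:ℝ) := lt_of_lt_of_le hm hma
  have hsm : 0 < Real.sqrt m := Real.sqrt_pos.2 hm
  set t := Real.sqrt a / Real.sqrt m with htdef
  have ht : 1 ≤ t := (one_le_div hsm).2 (Real.sqrt_le_sqrt hma)
  have hts : Real.sqrt (a:ℝ) = t * Real.sqrt m := (div_mul_cancel₀ _ hsm.ne').symm
  have hsqm : Real.sqrt m ^ 2 = m := Real.sq_sqrt hm.le
  have hA : (a:ℝ) = t^2 * m := by
    have : Real.sqrt (a:ℝ) ^ 2 = (a:ℝ) := Real.sq_sqrt haR.le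
    rw [hts] at this; rw [← this]; rw [mul_pow, hsqm]
  have hdiv : (0:ℝ) < m / a := div_pos hm haR
  have hpow : (m/(a:ℝ))^a = rexp ((a:ℝ) * Real.log (m/(a:ℝ))) := by
    rw [← Real.exp_log hdiv, ← Real.exp_nat_mul, Real.exp_log hdiv]
  have hlog : Real.log (m/(a:ℝ)) = -(2*Real.log t) := by
    rw [Real.log_div hm.ne' haR.ne', hA, Real.log_mul (by positivity) hm.ne',
      ← Real.rpow_natCast t 2, Real.log_rpow (by positivity)]
    push_cast; ring
  rw [hpow, ← Real.exp_add, Real.exp_le_exp, hlog]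
  have hkey := key_poly ht
  have h2 := mul_le_mul_of_nonneg_right hkey hm.le
  rw [hts, hA]
  nlinarith [hsqm, hm.le]

private lemma hasSum_shift (μ : ℝ) (a : ℕ) :
    HasSum (fun n : ℕ => rexp (-μ) * ((a:ℝ)^n / n !)) (rexp ((a:ℝ) - μ)) := by
  have h := (NormedSpace.expSeries_div_hasSum_exp ((a:ℕ):ℝ)).mul_left (rexp (-μ))
  rw [← Real.exp_eq_exp_ℝ, ← Real.exp_add] at h
  convert h using 2
  · rfl
  ring

/-- Lower confidence bound: `U₋(N,δ) = max{0, N − √(2·N·log(1/δ))}`. -/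
noncomputable def Uminus (N δ : ℝ) : ℝ :=
  max 0 (N - Real.sqrt (2 * N * Real.log (1 / δ)))

/-- If `N ~ Poisson(μ)` with `μ ≥ 0` and `δ ∈ (0,1)`, then
`P[μ < U₋(N,δ)] ≤ δ`. -/
theorem poisson_lower_confidence (μ : ℝ≥0) (δ : ℝ) (hδ : δ ∈ Set.Ioo (0 : ℝ) 1) :
    poissonMeasure μ {n : ℕ | (μ : ℝ) < Uminus (n : ℝ) δ} ≤ ENNReal.ofReal δ := by
  obtain ⟨hδ0, hδ1⟩ := hδ
  set L := Real.log (1/δ) with hLdef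
  have hL0 : 0 < L := Real.log_pos (by rw [lt_div_iff₀ hδ0]; linarith)
  set S := {n : ℕ | (μ : ℝ) < Uminus (n : ℝ) δ} with hSdef
  have hmem : ∀ n : ℕ, n ∈ S ↔ (μ:ℝ) < (n:ℝ) - Real.sqrt (2*(n:ℝ)*L) := by
    intro n
    simp only [hSdef, Set.mem_setOf_eq, Uminus, lt_max_iff]
    constructor
    · rintro (h | h)
      · exact absurd h (not_lt.2 μ.coe_nonneg)
      · exact h
    · exact Or.inr
  rcases Set.eq_empty_or_nonempty S with hSe | hSne
  · rw [hSe]; simp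
  have hmeas : poissonMeasure μ S = ∑' n, S.indicator (fun n => poissonPMF μ n) n :=
    by
      rw [poissonMeasure, Measure.sum_apply _ .of_discrete]
      congr 1; ext n
      by_cases h : n ∈ S <;> simp [h, ← poissonPMFReal_ofReal_eq_poissonPMF, poissonPMFReal]
  set a := sInf S with hadef
  have haS : a ∈ S := Nat.sInf_mem hSne
  have hale : ∀ n ∈ S, a ≤ n := fun n hn => Nat.sInf_le hn
  have haC := (hmem a).1 haS
  have hsqnn : 0 ≤ Real.sqrt (2*(a:ℝ)*L) := Real.sqrt_nonneg _
  have hμa : (μ:ℝ) < (a:ℝ) := by linarith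
  rcases eq_zero_or_pos μ with hμ0 | hμpos
  · -- μ = 0 : all pmf mass is at 0, which is not in S
    subst hμ0
    rw [hmeas]
    have hz : ∀ n, S.indicator (fun n => poissonPMF 0 n) n = 0 := by
      intro n
      rcases em (n ∈ S) with h | h
      · rw [Set.indicator_of_mem h]
        have hn : n ≠ 0 := by
          rintro rfl
          have := (hmem 0).1 h
          simp at this
        show ENNReal.ofReal (poissonPMFReal 0 n) = 0
        simp [poissonPMFReal, zero_pow hn]
      · rw [Set.indicator_of_notMem h]
    simp [hz]
  -- μ > 0
  have hμR : (0:ℝ) < μ := hμpos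
  have haR0 : (0:ℝ) < (a:ℝ) := lt_trans hμR hμa
  have hsq : 2*(a:ℝ)*L < ((a:ℝ) - μ)^2 := by
    have h1 : Real.sqrt (2*(a:ℝ)*L) < (a:ℝ) - μ := by linarith
    nlinarith [Real.sq_sqrt (show (0:ℝ) ≤ 2*(a:ℝ)*L by positivity)]
  have hLle : L ≤ 2*(Real.sqrt a - Real.sqrt μ)^2 := by
    have hsa : Real.sqrt (a:ℝ)^2 = (a:ℝ) := Real.sq_sqrt haR0.le
    have hsmu : Real.sqrt (μ:ℝ)^2 = (μ:ℝ) := Real.sq_sqrt μ.coe_nonneg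
    have hmono : Real.sqrt (μ:ℝ) ≤ Real.sqrt (a:ℝ) := Real.sqrt_le_sqrt hμa.le
    have hsm0 : 0 ≤ Real.sqrt (μ:ℝ) := Real.sqrt_nonneg _
    have hsa0 : 0 < Real.sqrt (a:ℝ) := Real.sqrt_pos.2 haR0
    rw [← hsa, ← hsmu] at hsq
    nlinarith [mul_nonneg (mul_nonneg (mul_nonneg (sub_nonneg.2 hmono) (sub_nonneg.2 hmono))
        (sub_nonneg.2 hmono)) (by positivity : (0:ℝ) ≤ 3*Real.sqrt (a:ℝ) + Real.sqrt (μ:ℝ)),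
      mul_pos hsa0 hsa0]
  set q : ℕ → ℝ := fun n => ((μ:ℝ)/a)^a * (rexp (-(μ:ℝ)) * ((a:ℝ)^n / n !)) with hqdef
  have hqnn : ∀ n, 0 ≤ q n := by intro n; simp only [hqdef]; positivity
  have hsumq : HasSum q (((μ:ℝ)/a)^a * rexp ((a:ℝ) - μ)) := (hasSum_shift μ a).mul_left _
  have hpt : ∀ n, S.indicator (fun n => poissonPMF μ n) n ≤ ENNReal.ofReal (q n) := by
    intro n
    rcases em (n ∈ S) with h | h
    · rw [Set.indicator_of_mem h]
      show ENNReal.ofReal (poissonPMFReal μ n) ≤ ENNReal.ofReal (q n)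
      apply ENNReal.ofReal_le_ofReal
      obtain ⟨k, rfl⟩ : ∃ k, n = a + k := ⟨n - a, by have := hale n h; omega⟩
      have hkey : ((μ:ℝ))^(a+k) ≤ ((μ:ℝ)/a)^a * (a:ℝ)^(a+k) := by
        have h1 : ((μ:ℝ)/a)^a * (a:ℝ)^(a+k) = (μ:ℝ)^a * (a:ℝ)^k := by
          rw [div_pow, pow_add]
          field_simp
        rw [h1, pow_add]
        exact mul_le_mul_of_nonneg_left (pow_le_pow_left₀ μ.coe_nonneg hμa.le k)
          (pow_nonneg μ.coe_nonneg a)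
      have h2 : q (a+k) = rexp (-(μ:ℝ)) * (((μ:ℝ)/a)^a * (a:ℝ)^(a+k)) / ((a+k)! : ℝ) := by
        simp only [hqdef]; ring
      rw [h2]
      unfold poissonPMFReal
      gcongr
    · rw [Set.indicator_of_notMem h]
      exact zero_le
  have hfinal : ((μ:ℝ)/a)^a * rexp ((a:ℝ) - μ) ≤ δ := by
    have h1 := expC hμR hμa.le
    have h2 : rexp (-(2*(Real.sqrt a - Real.sqrt μ)^2)) ≤ rexp (-L) :=
      Real.exp_le_exp.2 (by linarith)
    have h3 : rexp (-L) = δ := by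
      rw [hLdef, one_div, Real.log_inv, neg_neg, Real.exp_log hδ0]
    rw [mul_comm]
    linarith
  calc poissonMeasure μ S = ∑' n, S.indicator (fun n => poissonPMF μ n) n := hmeas
    _ ≤ ∑' n, ENNReal.ofReal (q n) := ENNReal.tsum_le_tsum hpt
    _ = ENNReal.ofReal (∑' n, q n) := (ENNReal.ofReal_tsum_of_nonneg hqnn hsumq.summable).symm
    _ = ENNReal.ofReal (((μ:ℝ)/a)^a * rexp ((a:ℝ) - μ)) := by rw [hsumq.tsum_eq]
    _ ≤ ENNReal.ofReal δ := ENNReal.ofReal_le_ofReal hfinal
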